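/- Let f be 2π-periodic with |f̂_k| ≤ C^n-type bounds as above, and for n ≥ 1 define the doubly-indexed kernel A_n(f)^∧_{kj} = −2|k|^n|j| (f^n)^∧_{k−j} / n! if kj < 0 and 0 if kj ≥ 0. If |(f^n)^∧_m| ≤ C^n e^{-ρ|m|} for all m, then for every square-summable sequence (φ̂_j), the sequence ( ∑_j A_n(f)^∧_{kj} φ̂_j )_k satisfies | ∑_j A_n(f)^∧_{kj} φ̂_j | ≤ ( ρ^{-3/2} e^{2ρ} ‖φ̂‖_{ℓ²} ) (C|k|)^n e^{-ρ|k|} / n! for all k ≠ 0. -/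
import Mathlib


open Real

-- Cauchy-Schwarz for tsums
lemma tsum_cs {ι : Type*} {f g : ι → ℝ} (hf0 : ∀ i, 0 ≤ f i) (hg0 : ∀ i, 0 ≤ g i)
    (hf : Summable fun i => f i ^ 2) (hg : Summable fun i => g i ^ 2) :
    ∑' i, f i * g i ≤ Real.sqrt (∑' i, f i ^ 2) * Real.sqrt (∑' i, g i ^ 2) := by
  have hfg : Summable fun i => f i * g i := by
    refine Summable.of_nonneg_of_le (fun i => mul_nonneg (hf0 i) (hg0 i)) (fun i => ?_)
      (((hf.add hg).div_const 2))
    nlinarith [sq_nonneg (f i - g i)]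
  refine Summable.tsum_le_of_sum_le hfg fun s => ?_
  calc ∑ i ∈ s, f i * g i
      ≤ Real.sqrt (∑ i ∈ s, f i ^ 2) * Real.sqrt (∑ i ∈ s, g i ^ 2) :=
        Real.sum_mul_le_sqrt_mul_sqrt s f g
    _ ≤ Real.sqrt (∑' i, f i ^ 2) * Real.sqrt (∑' i, g i ^ 2) := by
        gcongr <;> exact Summable.sum_le_tsum s (fun i _ => sq_nonneg _) ‹_›

-- summability of (m+1)^2 x^(m+1)
lemma summable_sq_geom {x : ℝ} (hx0 : 0 ≤ x) (hx1 : x < 1) :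
    Summable (fun m : ℕ => ((m : ℝ) + 1) ^ 2 * x ^ (m + 1)) := by
  have h := summable_pow_mul_geometric_of_norm_lt_one (R := ℝ) 2 (r := x)
    (by rwa [Real.norm_eq_abs, abs_of_nonneg hx0])
  have h2 := (h.mul_left x).add (((summable_pow_mul_geometric_of_norm_lt_one (R := ℝ) 1 (r := x)
    (by rwa [Real.norm_eq_abs, abs_of_nonneg hx0])).mul_left (2*x)).add
    ((summable_geometric_of_lt_one hx0 hx1).mul_left x))
  refine h2.congr fun m => ?_
  push_cast [Nat.cast_ofNat]
  ring

lemma tsum_sq_geom_le {x : ℝ} (hx0 : 0 ≤ x) (hx1 : x < 1) :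
    ∑' m : ℕ, ((m : ℝ) + 1) ^ 2 * x ^ (m + 1) ≤ 2 * x / (1 - x) ^ 3 := by
  have hxn : ‖x‖ < 1 := by rwa [Real.norm_eq_abs, abs_of_nonneg hx0]
  have hch := tsum_choose_mul_geometric_of_norm_lt_one (𝕜 := ℝ) 2 hxn
  have hchs := summable_choose_mul_geometric_of_norm_lt_one (R := ℝ) 2 hxn
  calc ∑' m : ℕ, ((m : ℝ) + 1) ^ 2 * x ^ (m + 1)
      ≤ ∑' m : ℕ, (2 * x) * (((m + 2).choose 2 : ℝ) * x ^ m) := by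
        refine Summable.tsum_le_tsum (fun m => ?_) (summable_sq_geom hx0 hx1) (hchs.mul_left (2*x))
        have h2n : 2 * ((m + 2).choose 2) = (m + 2) * (m + 1) := by
          have hdvd : 2 ∣ (m + 2) * (m + 2 - 1) := by
            simpa [Nat.mul_comm] using (Nat.even_mul_succ_self (m + 1)).two_dvd
          rw [Nat.choose_two_right, Nat.mul_div_cancel' hdvd]
          rfl
        have hc : ((m + 2).choose 2 : ℝ) = ((m : ℝ) + 2) * ((m : ℝ) + 1) / 2 := by
          have := congrArg (Nat.cast : ℕ → ℝ) h2n
          push_cast at this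
          linarith
        have h1 : ((m : ℝ) + 1) ^ 2 ≤ ((m : ℝ) + 1) * ((m : ℝ) + 2) :=
          by nlinarith [Nat.cast_nonneg (α := ℝ) m]
        calc ((m : ℝ) + 1) ^ 2 * x ^ (m + 1)
            ≤ (((m : ℝ) + 1) * ((m : ℝ) + 2)) * x ^ (m + 1) :=
              mul_le_mul_of_nonneg_right h1 (pow_nonneg hx0 _)
          _ = 2 * x * (((m + 2).choose 2 : ℝ) * x ^ m) := by rw [hc, pow_succ]; ring
    _ = 2 * x / (1 - x) ^ 3 := by
        rw [tsum_mul_left, hch]; ring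

-- |k - j| = |k| + |j| when k*j < 0, in ℝ after casting
lemma abs_sub_of_mul_neg {k j : ℤ} (h : k * j < 0) :
    |((k : ℝ) - (j : ℝ))| = |(k : ℝ)| + |(j : ℝ)| := by
  rcases mul_neg_iff.mp h with ⟨hk, hj⟩ | ⟨hk, hj⟩
  · have hk' : (0:ℝ) < (k:ℝ) := by exact_mod_cast hk
    have hj' : (j:ℝ) < 0 := by exact_mod_cast hj
    rw [abs_of_pos (by linarith), abs_of_pos hk', abs_of_neg hj']
    ring
  · have hk' : (k:ℝ) < 0 := by exact_mod_cast hk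
    have hj' : (0:ℝ) < (j:ℝ) := by exact_mod_cast hj
    rw [abs_of_neg (by linarith), abs_of_neg hk', abs_of_pos hj']
    ring

/-- The kernel A_n(f)^∧_{kj} = −2|k|^n |j| (f^n)^∧_{k−j}/n! for kj<0 (0 otherwise),
    applied to an ℓ² sequence φ̂, produces an exponentially decaying sequence:
    |∑_j A_n(f)^∧_{kj} φ̂_j| ≤ (ρ^{-3/2} e^{2ρ} ‖φ̂‖_{ℓ²}) (C|k|)^n e^{-ρ|k|}/n!. -/
theorem stmt_11 (n : ℕ) (hn : 1 ≤ n) (C ρ : ℝ) (hC : 1 ≤ C) (hρ : 0 < ρ)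
    (g : ℤ → ℂ) (hg : ∀ m : ℤ, ‖g m‖ ≤ C ^ n * Real.exp (-ρ * |(m : ℝ)|))
    (φ : ℤ → ℂ) (hφ : Summable (fun j : ℤ => ‖φ j‖ ^ 2))
    (A : ℤ → ℤ → ℂ)
    (hA : ∀ k j : ℤ, A k j =
      if k * j < 0 then -2 * |(k : ℝ)| ^ n * |(j : ℝ)| * g (k - j) / (n.factorial : ℝ)
      else 0) :
    ∀ k : ℤ, k ≠ 0 →
      ‖∑' j : ℤ, A k j * φ j‖ ≤
        (ρ ^ (-(3 : ℝ) / 2) * Real.exp (2 * ρ) * Real.sqrt (∑' j : ℤ, ‖φ j‖ ^ 2)) *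
          (C * |(k : ℝ)|) ^ n * Real.exp (-ρ * |(k : ℝ)|) / (n.factorial : ℝ) := by
  intro k hk
  set x : ℝ := Real.exp (-(2 * ρ)) with hxdef
  have hx0 : 0 ≤ x := (Real.exp_pos _).le
  have hx1 : x < 1 := Real.exp_lt_one_iff.mpr (by linarith)
  -- the weight
  set w : ℤ → ℝ := fun j => if k * j < 0 then 2 * |(j : ℝ)| * Real.exp (-ρ * |(j : ℝ)|) else 0
    with hwdef
  have hw0 : ∀ j, 0 ≤ w j := by
    intro j
    simp only [hwdef]
    split
    · positivity
    · exact le_rfl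
  set D : ℝ := |(k : ℝ)| ^ n * C ^ n * Real.exp (-ρ * |(k : ℝ)|) / (n.factorial : ℝ) with hDdef
  have hD0 : 0 ≤ D := by positivity
  -- pointwise bound
  have key : ∀ j : ℤ, ‖A k j * φ j‖ ≤ D * (w j * ‖φ j‖) := by
    intro j
    by_cases hkj : k * j < 0
    · have h1 : ‖A k j * φ j‖
          = 2 * |(k : ℝ)| ^ n * |(j : ℝ)| * ‖g (k - j)‖ / (n.factorial : ℝ) * ‖φ j‖ := by
        rw [hA, if_pos hkj]
        rw [norm_mul, norm_div, norm_mul, norm_mul, norm_mul]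
        simp [Complex.norm_real, Real.norm_eq_abs, abs_abs, Nat.abs_cast]
      have habs : |((k : ℝ)) - ((j : ℝ))| = |(k : ℝ)| + |(j : ℝ)| := abs_sub_of_mul_neg hkj
      have hgb : ‖g (k - j)‖ ≤ C ^ n * (Real.exp (-ρ * |(k : ℝ)|) * Real.exp (-ρ * |(j : ℝ)|)) := by
        calc ‖g (k - j)‖ ≤ C ^ n * Real.exp (-ρ * |((k - j : ℤ) : ℝ)|) := hg _
          _ = C ^ n * (Real.exp (-ρ * |(k : ℝ)|) * Real.exp (-ρ * |(j : ℝ)|)) := by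
              rw [show ((k - j : ℤ) : ℝ) = (k : ℝ) - (j : ℝ) by push_cast; ring, habs,
                show -ρ * (|(k : ℝ)| + |(j : ℝ)|) = -ρ * |(k : ℝ)| + -ρ * |(j : ℝ)| by ring,
                Real.exp_add]
      rw [h1]
      have hwj : w j = 2 * |(j : ℝ)| * Real.exp (-ρ * |(j : ℝ)|) := by
        rw [hwdef]; simp only [if_pos hkj]
      calc 2 * |(k : ℝ)| ^ n * |(j : ℝ)| * ‖g (k - j)‖ / (n.factorial : ℝ) * ‖φ j‖
          = (2 * |(k : ℝ)| ^ n * |(j : ℝ)| / (n.factorial : ℝ) * ‖φ j‖) * ‖g (k - j)‖ := by ring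
        _ ≤ (2 * |(k : ℝ)| ^ n * |(j : ℝ)| / (n.factorial : ℝ) * ‖φ j‖) *
              (C ^ n * (Real.exp (-ρ * |(k : ℝ)|) * Real.exp (-ρ * |(j : ℝ)|))) := by
            apply mul_le_mul_of_nonneg_left hgb (by positivity)
        _ = D * (w j * ‖φ j‖) := by rw [hDdef, hwj]; ring
    · rw [hA, if_neg hkj]
      simp only [hwdef, if_neg hkj, zero_mul, norm_zero, mul_zero]
      positivity
  -- the embedding of ℕ into the relevant half-line
  obtain ⟨e, he_inj, he_neg, he_surj, he_abs⟩ :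
      ∃ e : ℕ → ℤ, Function.Injective e ∧ (∀ m, k * e m < 0) ∧
        (∀ j, k * j < 0 → ∃ m, e m = j) ∧ (∀ m, |((e m : ℤ) : ℝ)| = (m : ℝ) + 1) := by
    rcases lt_or_gt_of_ne hk with hkneg | hkpos
    · refine ⟨fun m => (m : ℤ) + 1, fun a b hab => by simpa using hab, fun m => ?_, fun j hj => ?_, fun m => ?_⟩
      · exact mul_neg_of_neg_of_pos hkneg (by positivity)
      · have hjpos : 0 < j := by
          rcases mul_neg_iff.mp hj with ⟨h1, h2⟩ | ⟨h1, h2⟩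
          · omega
          · exact h2
        refine ⟨(j - 1).toNat, ?_⟩
        show ((j - 1).toNat : ℤ) + 1 = j
        omega
      · push_cast
        rw [abs_of_pos (by positivity)]
    · refine ⟨fun m => -((m : ℤ) + 1), fun a b hab => by simpa using hab, fun m => ?_, fun j hj => ?_, fun m => ?_⟩
      · exact mul_neg_of_pos_of_neg hkpos (by show -((m : ℤ) + 1) < 0; omega)
      · have hjneg : j < 0 := by
          rcases mul_neg_iff.mp hj with ⟨h1, h2⟩ | ⟨h1, h2⟩
          · exact h2
          · omega
        refine ⟨(-j - 1).toNat, ?_⟩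
        show -(((-j - 1).toNat : ℤ) + 1) = j
        omega
      · push_cast
        rw [abs_of_neg (by linarith [Nat.cast_nonneg (α := ℝ) m] : -((m : ℝ) + 1) < 0)]
        ring
  -- value of w along the embedding
  have hcomp : ∀ m : ℕ, w (e m) ^ 2 = 4 * (((m : ℝ) + 1) ^ 2 * x ^ (m + 1)) := by
    intro m
    have hwem : w (e m) = 2 * ((m : ℝ) + 1) * Real.exp (-ρ * ((m : ℝ) + 1)) := by
      rw [hwdef]
      simp only [if_pos (he_neg m)]
      rw [he_abs m]
    have h3 : x ^ (m + 1) = Real.exp (-(2 * ρ) * ((m : ℝ) + 1)) := by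
      rw [hxdef, ← Real.exp_nat_mul]
      congr 1
      push_cast
      ring
    have h2 : Real.exp (-ρ * ((m : ℝ) + 1)) ^ 2 = Real.exp (-(2 * ρ) * ((m : ℝ) + 1)) := by
      rw [sq, ← Real.exp_add]
      congr 1
      ring
    rw [hwem, h3, ← h2]
    ring
  -- support of w lies in the range of e
  have hsupp' : (Function.support fun j : ℤ => w j ^ 2) ⊆ Set.range e := by
    intro j hj
    by_contra hmem
    apply hj
    have hkj : ¬ k * j < 0 := by
      intro hkj
      rcases he_surj j hkj with ⟨m, hm⟩
      exact hmem ⟨m, hm⟩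
    rw [hwdef]
    simp only [if_neg hkj]
    norm_num
  have hsupp : ∀ j ∉ Set.range e, w j ^ 2 = 0 := by
    intro j hj
    rw [hwdef]
    simp only
    rw [if_neg fun hkj => hj (by rcases he_surj j hkj with ⟨m, hm⟩ ; exact ⟨m, hm⟩)]
    norm_num
  -- summability of w ^ 2
  have hW2 : Summable (fun j : ℤ => w j ^ 2) := by
    have hnat : Summable (fun m : ℕ => w (e m) ^ 2) :=
      ((summable_sq_geom hx0 hx1).mul_left 4).congr fun m => (hcomp m).symm
    exact (he_inj.summable_iff hsupp).mp hnat
  -- bound on the tsum of w ^ 2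
  have hTsumW : ∑' j : ℤ, w j ^ 2 ≤ Real.exp (4 * ρ) / ρ ^ 3 := by
    rw [← he_inj.tsum_eq (f := fun j => w j ^ 2) hsupp']
    have hxpos : 0 < x := Real.exp_pos _
    have hprod : Real.exp (2 * ρ) * x = 1 := by
      rw [hxdef, ← Real.exp_add]
      norm_num
    have h1x : 2 * ρ * x ≤ 1 - x := by
      have hexp := Real.add_one_le_exp (2 * ρ)
      nlinarith [hxpos]
    have h3 : (2 * ρ * x) ^ 3 ≤ (1 - x) ^ 3 := pow_le_pow_left₀ (by positivity) h1x 3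
    have hx2 : x * x * Real.exp (4 * ρ) = 1 := by
      rw [hxdef, ← Real.exp_add, ← Real.exp_add,
        show -(2 * ρ) + -(2 * ρ) + 4 * ρ = 0 by ring, Real.exp_zero]
    calc ∑' m : ℕ, w (e m) ^ 2
        = ∑' m : ℕ, 4 * (((m : ℝ) + 1) ^ 2 * x ^ (m + 1)) := tsum_congr hcomp
      _ = 4 * ∑' m : ℕ, ((m : ℝ) + 1) ^ 2 * x ^ (m + 1) := tsum_mul_left
      _ ≤ 4 * (2 * x / (1 - x) ^ 3) := by
          exact mul_le_mul_of_nonneg_left (tsum_sq_geom_le hx0 hx1) (by norm_num)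
      _ = 8 * x / (1 - x) ^ 3 := by ring
      _ ≤ 8 * x / ((2 * ρ * x) ^ 3) := by
          apply div_le_div_of_nonneg_left (by positivity) (by positivity) h3
      _ = Real.exp (4 * ρ) / ρ ^ 3 := by
          rw [div_eq_div_iff (by positivity) (by positivity)]
          linear_combination (-(8 * ρ ^ 3 * x)) * hx2
  -- sqrt bound
  have hB0 : 0 ≤ ρ ^ (-(3 : ℝ) / 2) * Real.exp (2 * ρ) := by positivity
  have hB2 : (ρ ^ (-(3 : ℝ) / 2) * Real.exp (2 * ρ)) ^ 2 = Real.exp (4 * ρ) / ρ ^ 3 := by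
    rw [mul_pow]
    have e1 : (ρ ^ (-(3 : ℝ) / 2)) ^ 2 = ρ ^ (-(3 : ℝ)) := by
      rw [← Real.rpow_natCast (ρ ^ (-(3 : ℝ) / 2)) 2, ← Real.rpow_mul hρ.le]
      norm_num
    have e2 : ρ ^ (-(3 : ℝ)) = (ρ ^ (3 : ℕ))⁻¹ := by
      rw [Real.rpow_neg hρ.le, ← Real.rpow_natCast ρ 3]
      norm_num
    have e3 : Real.exp (2 * ρ) ^ 2 = Real.exp (4 * ρ) := by
      rw [sq, ← Real.exp_add]
      ring_nf
    rw [e1, e2, e3]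
    field_simp
  have hsqrtw : Real.sqrt (∑' j : ℤ, w j ^ 2) ≤ ρ ^ (-(3 : ℝ) / 2) * Real.exp (2 * ρ) := by
    rw [show ρ ^ (-(3 : ℝ) / 2) * Real.exp (2 * ρ)
        = Real.sqrt ((ρ ^ (-(3 : ℝ) / 2) * Real.exp (2 * ρ)) ^ 2) from (Real.sqrt_sq hB0).symm]
    exact Real.sqrt_le_sqrt (hB2 ▸ hTsumW)
  -- summability of the product
  have hwφ : Summable (fun j : ℤ => w j * ‖φ j‖) := by
    refine Summable.of_nonneg_of_le (fun j => mul_nonneg (hw0 j) (norm_nonneg _)) (fun j => ?_)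
      ((hW2.add hφ).div_const 2)
    nlinarith [sq_nonneg (w j - ‖φ j‖)]
  have hFsum : Summable (fun j : ℤ => ‖A k j * φ j‖) :=
    Summable.of_nonneg_of_le (fun j => norm_nonneg _) key (hwφ.mul_left D)
  -- final chain
  calc ‖∑' j : ℤ, A k j * φ j‖
      ≤ ∑' j : ℤ, ‖A k j * φ j‖ := norm_tsum_le_tsum_norm hFsum
    _ ≤ ∑' j : ℤ, D * (w j * ‖φ j‖) := Summable.tsum_le_tsum key hFsum (hwφ.mul_left D)
    _ = D * ∑' j : ℤ, w j * ‖φ j‖ := tsum_mul_left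
    _ ≤ D * (Real.sqrt (∑' j : ℤ, w j ^ 2) * Real.sqrt (∑' j : ℤ, ‖φ j‖ ^ 2)) :=
        mul_le_mul_of_nonneg_left (tsum_cs hw0 (fun j => norm_nonneg _) hW2 hφ) hD0
    _ ≤ D * ((ρ ^ (-(3 : ℝ) / 2) * Real.exp (2 * ρ)) * Real.sqrt (∑' j : ℤ, ‖φ j‖ ^ 2)) := by
        apply mul_le_mul_of_nonneg_left ?_ hD0
        exact mul_le_mul_of_nonneg_right hsqrtw (Real.sqrt_nonneg _)
    _ = (ρ ^ (-(3 : ℝ) / 2) * Real.exp (2 * ρ) * Real.sqrt (∑' j : ℤ, ‖φ j‖ ^ 2)) *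
          (C * |(k : ℝ)|) ^ n * Real.exp (-ρ * |(k : ℝ)|) / (n.factorial : ℝ) := by
        rw [hDdef, mul_pow]
        ring
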